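/- Let P_i > 0, P_j ≥ 0 for j = i+1,…,K, σ² > 0, c > 0, and p ∈ (0,1). If |h|² is exponentially distributed with mean c, then P( |h|²·P_i / (∑_{j>i} |h|²·P_j + σ²) > t ) ≤ p holds for all t satisfying t ≥ log(1/p)·c·P_i / ( log(1/p)·∑_{j>i} c·P_j + σ² ), provided P_i − t·∑_{j>i} P_j > 0 for such t; moreover when P_i − t·∑_{j>i} P_j ≤ 0 the probability is zero. -/

import Mathlib

open MeasureTheory in
lemma exp_tail_integral (c : ℝ) (hc : 0 < c) (a : ℝ) :
    (∫ x in Set.Ioi a, (1 / c) * Real.exp (-x / c)) = Real.exp (-a / c) := by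
  have hint : IntegrableOn (fun x : ℝ => (1 / c) * Real.exp (-x / c)) (Set.Ioi a) := by
    have h : IntegrableOn (fun x : ℝ => (1 / c) * Real.exp (-(1 / c) * x)) (Set.Ioi a) :=
      (exp_neg_integrableOn_Ioi a (by positivity)).const_mul (1 / c)
    have heq : (fun x : ℝ => (1 / c) * Real.exp (-x / c))
        = fun x : ℝ => (1 / c) * Real.exp (-(1 / c) * x) := by
      funext x; rw [show -x / c = -(1 / c) * x by ring]
    rw [heq]; exact h
  have hderiv : ∀ x ∈ Set.Ioi a,
      HasDerivAt (fun x : ℝ => -Real.exp (-x / c)) ((1 / c) * Real.exp (-x / c)) x := by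
    intro x _
    have h1 : HasDerivAt (fun x : ℝ => -x / c) (-1 / c) x := by
      exact (hasDerivAt_id x).neg.div_const c
    have h2 := ((Real.hasDerivAt_exp (-x / c)).comp x h1).neg
    exact h2.congr_deriv (by ring)
  have hcont : ContinuousOn (fun x : ℝ => -Real.exp (-x / c)) (Set.Ici a) :=
    (by fun_prop : Continuous fun x : ℝ => -Real.exp (-x / c)).continuousOn
  have htend : Filter.Tendsto (fun x : ℝ => -Real.exp (-x / c)) Filter.atTop (nhds 0) := by
    rw [show (0 : ℝ) = -0 by ring]
    apply Filter.Tendsto.neg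
    apply Real.tendsto_exp_atBot.comp
    apply Filter.Tendsto.atBot_div_const hc
    exact Filter.tendsto_neg_atBot_iff.mpr Filter.tendsto_id
  have := integral_Ioi_of_hasDerivAt_of_tendsto (hcont a Set.self_mem_Ici) hderiv hint htend
  rw [this]; ring

open Finset in
/-- Closed-form secrecy-outage condition for the single-antenna NOMA case.
`|h|²` is exponential with mean `c`; `P i > 0`, `P j ≥ 0` for `j > i`, `σ² > 0`,
`p ∈ (0,1)`.  The probability (written via the exponential density) that the
eavesdropper's SINR `|h|²·P_i / (∑_{j>i} |h|²·P_j + σ²)` exceeds `t` is at most `p`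
whenever `t ≥ log(1/p)·c·P_i / (log(1/p)·∑_{j>i} c·P_j + σ²)` and
`P_i − t·∑_{j>i} P_j > 0`; moreover when `P_i − t·∑_{j>i} P_j ≤ 0` the probability
is zero. -/
theorem siso_sop_condition (K : ℕ) (P : Fin K → ℝ) (i : Fin K) (σ2 c p t : ℝ)
    (hPi : 0 < P i) (hPj : ∀ j, i < j → 0 ≤ P j) (hσ : 0 < σ2) (hc : 0 < c)
    (hp0 : 0 < p) (hp1 : p < 1) :
    ((t ≥ Real.log (1 / p) * c * P i /
        (Real.log (1 / p) * ∑ j ∈ univ.filter (fun j => i < j), c * P j + σ2) →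
      0 < P i - t * ∑ j ∈ univ.filter (fun j => i < j), P j →
      (∫ x in {x : ℝ | x * P i / (x * (∑ j ∈ univ.filter (fun j => i < j), P j) + σ2) > t}
          ∩ Set.Ici 0, (1 / c) * Real.exp (-x / c)) ≤ p)
    ∧ (P i - t * ∑ j ∈ univ.filter (fun j => i < j), P j ≤ 0 →
      (∫ x in {x : ℝ | x * P i / (x * (∑ j ∈ univ.filter (fun j => i < j), P j) + σ2) > t}
          ∩ Set.Ici 0, (1 / c) * Real.exp (-x / c)) = 0)) := by
  set S := ∑ j ∈ univ.filter (fun j => i < j), P j with hSdef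
  have hS0 : 0 ≤ S := Finset.sum_nonneg fun j hj => hPj j (Finset.mem_filter.mp hj).2
  have hcS : ∑ j ∈ univ.filter (fun j => i < j), c * P j = c * S := by
    rw [hSdef, Finset.mul_sum]
  constructor
  · intro ht hpos
    set L := Real.log (1 / p) with hLdef
    have hL0 : 0 < L := by
      rw [hLdef, Real.log_div one_ne_zero (ne_of_gt hp0), Real.log_one]
      have := Real.log_neg hp0 hp1
      linarith
    have hD : 0 < L * (c * S) + σ2 := by positivity
    have ht' : L * c * P i ≤ t * (L * (c * S) + σ2) := by
      rw [hcS] at ht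
      exact (div_le_iff₀ hD).mp ht
    have ht0 : 0 < t := by
      by_contra h
      push_neg at h
      nlinarith [mul_nonneg (neg_nonneg.mpr h) hD.le, mul_pos (mul_pos hL0 hc) hPi]
    set x0 : ℝ := t * σ2 / (P i - t * S) with hx0def
    have hx0pos : 0 < x0 := by positivity
    have hset : {x : ℝ | x * P i / (x * S + σ2) > t} ∩ Set.Ici 0 = Set.Ioi x0 := by
      ext x
      simp only [Set.mem_inter_iff, Set.mem_setOf_eq, Set.mem_Ici, Set.mem_Ioi]
      constructor
      · rintro ⟨hgt, hx0⟩
        have hden : 0 < x * S + σ2 := by positivity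
        rw [gt_iff_lt, lt_div_iff₀ hden] at hgt
        rw [hx0def, div_lt_iff₀ hpos]
        nlinarith
      · intro hx
        have hx0' : 0 ≤ x := le_of_lt (lt_trans hx0pos hx)
        have hden : 0 < x * S + σ2 := by positivity
        rw [hx0def, div_lt_iff₀ hpos] at hx
        refine ⟨?_, hx0'⟩
        rw [gt_iff_lt, lt_div_iff₀ hden]
        nlinarith
    rw [hset, exp_tail_integral c hc x0]
    have hx0ge : c * L ≤ x0 := by
      rw [hx0def, le_div_iff₀ hpos]
      nlinarith
    rw [show p = Real.exp (Real.log p) from (Real.exp_log hp0).symm]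
    apply Real.exp_le_exp.mpr
    have hlogp : Real.log p = -L := by
      rw [hLdef, Real.log_div one_ne_zero (ne_of_gt hp0), Real.log_one]; ring
    rw [hlogp]
    rw [div_le_iff₀ hc] at *
    nlinarith
  · intro hneg
    have hset : {x : ℝ | x * P i / (x * S + σ2) > t} ∩ Set.Ici 0 = ∅ := by
      ext x
      simp only [Set.mem_inter_iff, Set.mem_setOf_eq, Set.mem_Ici, Set.mem_empty_iff_false,
        iff_false, not_and]
      intro hgt hx0
      have hden : 0 < x * S + σ2 := by positivity
      rw [gt_iff_lt, lt_div_iff₀ hden] at hgt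
      have hS' : 0 < S := by
        rcases lt_or_eq_of_le hS0 with h | h
        · exact h
        · exfalso; nlinarith [sq_nonneg t]
      have ht0 : 0 < t := by nlinarith
      nlinarith
    rw [hset]
    simp
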